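/- Let A be a nonnegative selfadjoint operator on a complex Hilbert space X. Then for every g ∈ X and every t > 0, the transmutation formula e^{-tA} g = (1/2) π^{-1/2} t^{-3/2} ∫₀^∞ σ e^{-σ²/(4t)} W_A(σ) g dσ holds, where W_A(σ)g = A^{-1/2} sin(σ A^{1/2}) g (defined via the bounded Borel functional calculus with the entire function λ ↦ sin(σ√λ)/√λ). -/

import Mathlib

/-!
By the spectral theorem, every nonnegative selfadjoint operator `A` on a complex
Hilbert space `X` (with trivial kernel) is unitarily equivalent to multiplication by a
measurable function `a ≥ 0` (with `a > 0` a.e.) on some `L²(μ)`.  We formalize the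
statement in this spectral model: `X = L²(μ)`, `(e^{-tA}x)(i) = exp(-t·a i)·x i`,
`(A^α y)(i) = (a i)^α·y i`, and `x ∈ R(A^α)` iff `x = A^α y` for some `y ∈ L²(μ)`.
-/

open MeasureTheory Filter
open scoped ENNReal NNReal Topology

/-- `‖e^{-tA} x‖²` in the spectral model. -/
noncomputable def heatNormSq {ι : Type*} [MeasurableSpace ι] (μ : Measure ι)
    (a : ι → ℝ) (x : ι → ℂ) (t : ℝ) : ℝ≥0∞ :=
  ∫⁻ i, (‖x i‖₊ : ℝ≥0∞) ^ 2 * ENNReal.ofReal (Real.exp (-(2 * t * a i))) ∂μ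

/-- `∫₀^∞ t^{2α-1} ‖e^{-tA} x‖² dt` in the spectral model; this is the square of the
norm `|||x|||_{R(A^α)}`. -/
noncomputable def rangeIntegral {ι : Type*} [MeasurableSpace ι] (μ : Measure ι)
    (a : ι → ℝ) (α : ℝ) (x : ι → ℂ) : ℝ≥0∞ :=
  ∫⁻ t in Set.Ioi (0 : ℝ), ENNReal.ofReal (t ^ (2 * α - 1)) * heatNormSq μ a x t

/-- The wave-propagator kernel `sin(t√λ)/√λ` (continuously extended by `t` at `λ = 0`),
so that `(W_A(t)g)(i) = waveKernel t (a i) · g i` in the spectral model. -/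
noncomputable def waveKernel (t lam : ℝ) : ℝ :=
  if lam = 0 then t else Real.sin (t * Real.sqrt lam) / Real.sqrt lam


section Aux
open MeasureTheory Filter Set Complex Real

private lemma even_half' (f : ℝ → ℝ) (hf : ∀ x, f (-x) = f x) (hint : Integrable f) :
    ∫ x in Ioi (0:ℝ), f x = (∫ x:ℝ, f x) / 2 := by
  have h1 : ∫ x in Iic (0:ℝ), f x = ∫ x in Ioi (0:ℝ), f x := by
    rw [← neg_zero, ← integral_comp_neg_Iic]
    simp [hf]
  rw [← integral_add_compl measurableSet_Ioi hint, compl_Ioi, h1]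
  ring

private lemma integrable_x_gauss' {b : ℝ} (hb : 0 < b) :
    Integrable (fun x : ℝ => x * Real.exp (-b * x ^ 2)) := by
  have := integrable_rpow_mul_exp_neg_mul_sq hb (s := 1) (by norm_num)
  simpa [Real.rpow_one] using this

private lemma integrable_x_gauss_sin' {b c : ℝ} (hb : 0 < b) :
    Integrable (fun x : ℝ => x * Real.exp (-b * x ^ 2) * Real.sin (x * c)) := by
  refine (integrable_x_gauss' hb).norm.mono' ?_ ?_
  · exact (continuous_id.mul (Real.continuous_exp.comp (by continuity))).mul
      (Real.continuous_sin.comp (by continuity)) |>.aestronglyMeasurable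
  · refine Filter.Eventually.of_forall fun x => ?_
    rw [Real.norm_eq_abs, abs_mul]
    calc |x * Real.exp (-b * x ^ 2)| * |Real.sin (x * c)|
        ≤ |x * Real.exp (-b * x ^ 2)| * 1 :=
          mul_le_mul_of_nonneg_left (abs_le.mpr ⟨Real.neg_one_le_sin _, Real.sin_le_one _⟩)
            (abs_nonneg _)
      _ = ‖x * Real.exp (-b * x ^ 2)‖ := by rw [mul_one, Real.norm_eq_abs]

private lemma cexp_I_mul_abs' (c x : ℝ) : ‖Complex.exp (I * c * x)‖ = 1 := by
  simp [Complex.norm_exp]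

private lemma cexp_gauss_eq' (b x : ℝ) :
    Complex.exp (-(b:ℂ) * (x:ℂ) ^ 2) = ((Real.exp (-b * x ^ 2) : ℝ) : ℂ) := by
  rw [Complex.ofReal_exp]; push_cast; ring_nf

private lemma hK' {b : ℝ} (hb : 0 < b) (c : ℝ) :
    ∫ x : ℝ, Complex.exp (I * c * x) * ((x : ℂ) * Complex.exp (-(b:ℂ) * (x:ℂ) ^ 2))
      = (I * c / (2 * b)) *
        (((Real.pi : ℂ) / b) ^ (1 / 2 : ℂ) * Complex.exp (-(c:ℂ) ^ 2 / (4 * b))) := by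
  have hbC : (0:ℝ) < ((b:ℂ)).re := by simpa using hb
  have hbne : (b:ℂ) ≠ 0 := by exact_mod_cast hb.ne'
  set u : ℝ → ℂ := fun x => Complex.exp (I * c * x) with hu_def
  set v : ℝ → ℂ := fun x => (-(1:ℂ) / (2 * b)) * Complex.exp (-(b:ℂ) * (x:ℂ) ^ 2) with hv_def
  set u' : ℝ → ℂ := fun x => (I * c) * Complex.exp (I * c * x) with hu'_def
  set v' : ℝ → ℂ := fun x => (x : ℂ) * Complex.exp (-(b:ℂ) * (x:ℂ) ^ 2) with hv'_def
  have hu : ∀ x : ℝ, HasDerivAt u (u' x) x := by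
    intro x
    have h1 : HasDerivAt (fun z : ℂ => Complex.exp (I * c * z))
        (Complex.exp (I * c * x) * (I * c)) (x : ℂ) := by
      simpa [id] using ((hasDerivAt_id (x:ℂ)).const_mul (I * c)).cexp
    simpa [hu_def, hu'_def, mul_comm] using h1.comp_ofReal
  have hv : ∀ x : ℝ, HasDerivAt v (v' x) x := by
    intro x
    have h1 : HasDerivAt (fun z : ℂ => (-(1:ℂ) / (2 * b)) * Complex.exp (-(b:ℂ) * z ^ 2))
        ((-(1:ℂ) / (2 * b)) *
          (Complex.exp (-(b:ℂ) * (x:ℂ) ^ 2) * (-(b:ℂ) * (2 * (x:ℂ) ^ 1)))) (x : ℂ) := by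
      exact (((hasDerivAt_pow 2 (x:ℂ)).const_mul (-(b:ℂ))).cexp).const_mul _
    have h2 := h1.comp_ofReal
    convert h2 using 1
    rw [hv'_def]
    field_simp
  have huv' : Integrable (u * v') := by
    have hxg : Integrable (fun x : ℝ => x * Real.exp (-b * x ^ 2)) :=
      integrable_rpow_mul_exp_neg_mul_sq hb (s := 1) (by norm_num) |>.congr
        (Filter.Eventually.of_forall fun x => by simp [Real.rpow_one])
    refine hxg.norm.mono' ?_ (Filter.Eventually.of_forall fun x => ?_)
    · apply Continuous.aestronglyMeasurable
      apply Continuous.mul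
      · exact Complex.continuous_exp.comp (by continuity)
      · exact (Complex.continuous_ofReal).mul (Complex.continuous_exp.comp (by continuity))
    · rw [Pi.mul_apply, hu_def, hv'_def]
      simp only [norm_mul, cexp_I_mul_abs', one_mul, cexp_gauss_eq',
        Complex.norm_real, Real.norm_eq_abs, abs_mul, le_refl]
  have hexp_int : Integrable (fun x : ℝ => Real.exp (-b * x ^ 2)) := integrable_exp_neg_mul_sq hb
  have hu'v : Integrable (u' * v) := by
    refine ((hexp_int.const_mul (‖I * (c:ℂ)‖ * ‖-(1:ℂ)/(2*b)‖)).mono' ?_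
      (Filter.Eventually.of_forall fun x => ?_))
    · apply Continuous.aestronglyMeasurable
      apply Continuous.mul
      · exact continuous_const.mul (Complex.continuous_exp.comp (by continuity))
      · exact continuous_const.mul (Complex.continuous_exp.comp (by continuity))
    · rw [Pi.mul_apply, hu'_def, hv_def]
      simp only [norm_mul, cexp_I_mul_abs', cexp_gauss_eq',
        Complex.norm_real, Real.norm_eq_abs, Real.abs_exp, mul_one]
      apply le_of_eq; ring
  have huv : Integrable (u * v) := by
    refine ((hexp_int.const_mul (‖-(1:ℂ)/(2*b)‖)).mono' ?_
      (Filter.Eventually.of_forall fun x => ?_))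
    · apply Continuous.aestronglyMeasurable
      apply Continuous.mul
      · exact Complex.continuous_exp.comp (by continuity)
      · exact continuous_const.mul (Complex.continuous_exp.comp (by continuity))
    · rw [Pi.mul_apply, hu_def, hv_def]
      simp only [norm_mul, cexp_I_mul_abs', one_mul, cexp_gauss_eq',
        Complex.norm_real, Real.norm_eq_abs, Real.abs_exp, mul_one]
      apply le_of_eq; ring
  have hibp := MeasureTheory.integral_mul_deriv_eq_deriv_mul_of_integrable (fun x _ => hu x) (fun x _ => hv x) huv' hu'v huv
  have hJ := fourierIntegral_gaussian hbC (c : ℂ)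
  calc ∫ x : ℝ, Complex.exp (I * c * x) * ((x : ℂ) * Complex.exp (-(b:ℂ) * (x:ℂ) ^ 2))
      = ∫ x : ℝ, u x * v' x := rfl
    _ = - ∫ x : ℝ, u' x * v x := hibp
    _ = - ∫ x : ℝ, ((I * c) * (-(1:ℂ) / (2 * b))) *
          (Complex.exp (I * c * x) * Complex.exp (-(b:ℂ) * (x:ℂ) ^ 2)) := by
        congr 1; refine integral_congr_ae (Filter.Eventually.of_forall fun x => ?_)
        rw [hu'_def, hv_def]; ring
    _ = - (((I * c) * (-(1:ℂ) / (2 * b))) *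
          ∫ x : ℝ, Complex.exp (I * c * x) * Complex.exp (-(b:ℂ) * (x:ℂ) ^ 2)) := by
        rw [integral_const_mul]
    _ = (I * c / (2 * b)) *
          (((Real.pi : ℂ) / b) ^ (1 / 2 : ℂ) * Complex.exp (-(c:ℂ) ^ 2 / (4 * b))) := by
        rw [hJ]; ring

private lemma gauss_sin' {b : ℝ} (hb : 0 < b) (c : ℝ) :
    ∫ x in Ioi (0:ℝ), x * Real.exp (-b * x ^ 2) * Real.sin (x * c)
      = c / (4 * b) * Real.sqrt (Real.pi / b) * Real.exp (-c ^ 2 / (4 * b)) := by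
  have hbne : b ≠ 0 := hb.ne'
  have heven : ∀ x : ℝ, (-x) * Real.exp (-b * (-x) ^ 2) * Real.sin ((-x) * c)
      = x * Real.exp (-b * x ^ 2) * Real.sin (x * c) := by
    intro x; rw [neg_sq, neg_mul x c, Real.sin_neg]; ring
  rw [even_half' _ heven (integrable_x_gauss_sin' hb)]
  have hKint : Integrable (fun x : ℝ =>
      Complex.exp (I * c * x) * ((x : ℂ) * Complex.exp (-(b:ℂ) * (x:ℂ) ^ 2))) := by
    refine (integrable_x_gauss' hb).norm.mono' ?_ (Filter.Eventually.of_forall fun x => ?_)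
    · apply Continuous.aestronglyMeasurable
      exact (Complex.continuous_exp.comp (by continuity)).mul
        ((Complex.continuous_ofReal).mul (Complex.continuous_exp.comp (by continuity)))
    · simp only [norm_mul, cexp_I_mul_abs', one_mul, cexp_gauss_eq',
        Complex.norm_real, Real.norm_eq_abs, abs_mul, le_refl]
  have him : (∫ x : ℝ, x * Real.exp (-b * x ^ 2) * Real.sin (x * c))
      = (∫ x : ℝ, Complex.exp (I * c * x) * ((x : ℂ) * Complex.exp (-(b:ℂ) * (x:ℂ) ^ 2))).im := by
    have h0 := integral_im (𝕜 := ℂ) hKint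
    simp only [RCLike.im_to_complex] at h0
    rw [← h0]
    refine integral_congr_ae (Filter.Eventually.of_forall fun x => ?_)
    have key : Complex.exp (I * c * x) * ((x : ℂ) * Complex.exp (-(b:ℂ) * (x:ℂ) ^ 2))
        = ((x * Real.exp (-b * x ^ 2) * Real.cos (x * c) : ℝ) : ℂ)
          + ((x * Real.exp (-b * x ^ 2) * Real.sin (x * c) : ℝ) : ℂ) * I := by
      rw [cexp_gauss_eq', show I * (c:ℂ) * (x:ℂ) = ((x * c : ℝ) : ℂ) * I by push_cast; ring,
        Complex.exp_mul_I, ← Complex.ofReal_cos, ← Complex.ofReal_sin]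
      push_cast; ring
    show _ = (cexp (I * ↑c * ↑x) * (↑x * cexp (-↑b * ↑x ^ 2))).im
    rw [key]
    simp only [Complex.add_im, Complex.mul_im, Complex.ofReal_re, Complex.ofReal_im,
      Complex.I_re, Complex.I_im, mul_zero, mul_one, zero_mul, add_zero, zero_add]
  have hsqrt : ((Real.pi : ℂ) / b) ^ (1 / 2 : ℂ) = ((Real.sqrt (Real.pi / b) : ℝ) : ℂ) := by
    rw [Real.sqrt_eq_rpow, Complex.ofReal_cpow (by positivity)]
    push_cast; norm_num
  have hexp : Complex.exp (-(c:ℂ) ^ 2 / (4 * b)) = ((Real.exp (-c ^ 2 / (4 * b)) : ℝ) : ℂ) := by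
    rw [Complex.ofReal_exp]; push_cast; ring_nf
  rw [him, hK' hb c, hsqrt, hexp]
  have : (I * c / (2 * b)) *
      (((Real.sqrt (Real.pi / b) : ℝ) : ℂ) * ((Real.exp (-c ^ 2 / (4 * b)) : ℝ) : ℂ))
      = ((c / (2 * b) * (Real.sqrt (Real.pi / b) * Real.exp (-c ^ 2 / (4 * b))) : ℝ) : ℂ) * I := by
    push_cast; ring
  rw [this]
  simp only [Complex.mul_im, Complex.ofReal_re, Complex.ofReal_im, Complex.I_re,
    Complex.I_im, mul_zero, mul_one, zero_mul, add_zero, zero_add]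
  field_simp
  ring

private lemma gauss_moment2' {b : ℝ} (hb : 0 < b) :
    ∫ x in Ioi (0:ℝ), x ^ 2 * Real.exp (-b * x ^ 2)
      = 1 / (4 * b) * Real.sqrt (Real.pi / b) := by
  have h := _root_.integral_rpow_mul_exp_neg_mul_rpow (p := 2) (q := 2) (by norm_num) (by norm_num) hb
  simp only [Real.rpow_two] at h
  rw [show ((2:ℝ) + 1) / 2 = 1/2 + 1 by norm_num, Real.Gamma_add_one (by norm_num),
    Real.Gamma_one_half_eq] at h
  rw [h]
  have hb32 : b ^ (-(2 + 1) / 2 : ℝ) = (b * Real.sqrt b)⁻¹ := by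
    rw [show (-(2+1)/2 : ℝ) = -(1 + 1/2) by norm_num, Real.rpow_neg hb.le,
      Real.rpow_add hb, Real.rpow_one, ← Real.sqrt_eq_rpow]
  rw [hb32, Real.sqrt_div pi_nonneg]
  have hsb : Real.sqrt b ≠ 0 := (Real.sqrt_pos.mpr hb).ne'
  field_simp
  ring_nf
  try simp
  try tauto

private lemma key' {t lam : ℝ} (ht : 0 < t) (hlam : 0 ≤ lam) :
    Real.exp (-(t * lam)) = ((1/2) * Real.pi ^ (-(1:ℝ)/2) * t ^ (-(3:ℝ)/2)) *
      ∫ σ in Ioi (0:ℝ), σ * Real.exp (-(σ^2/(4*t))) * waveKernel σ lam := by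
  set b : ℝ := 1 / (4*t) with hb_def
  have hb : 0 < b := by positivity
  have hst : (0:ℝ) < Real.sqrt t := Real.sqrt_pos.mpr ht
  have hsp : (0:ℝ) < Real.sqrt Real.pi := Real.sqrt_pos.mpr pi_pos
  have hpow : Real.pi ^ (-(1:ℝ)/2) = (Real.sqrt Real.pi)⁻¹ := by
    rw [show (-(1:ℝ)/2) = -(1/2) by norm_num, Real.rpow_neg pi_nonneg, ← Real.sqrt_eq_rpow]
  have htpow : t ^ (-(3:ℝ)/2) = (t * Real.sqrt t)⁻¹ := by
    rw [show (-(3:ℝ)/2) = -(1 + 1/2) by norm_num, Real.rpow_neg ht.le,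
      Real.rpow_add ht, Real.rpow_one, ← Real.sqrt_eq_rpow]
  have hsq : Real.sqrt (Real.pi / b) = 2 * Real.sqrt Real.pi * Real.sqrt t := by
    rw [show Real.pi / b = (2 * Real.sqrt Real.pi * Real.sqrt t) ^ 2 by
      rw [mul_pow, mul_pow, Real.sq_sqrt pi_nonneg, Real.sq_sqrt ht.le, hb_def]
      field_simp; ring, Real.sqrt_sq (by positivity)]
  have hexp_rw : ∀ σ : ℝ, Real.exp (-(σ^2/(4*t))) = Real.exp (-b * σ^2) := by
    intro σ; congr 1; rw [hb_def]; field_simp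
  rcases eq_or_lt_of_le hlam with hlam0 | hlam0
  · rw [← hlam0]
    have hint : ∫ σ in Ioi (0:ℝ), σ * Real.exp (-(σ^2/(4*t))) * waveKernel σ 0
        = ∫ σ in Ioi (0:ℝ), σ ^ 2 * Real.exp (-b * σ^2) := by
      refine setIntegral_congr_fun measurableSet_Ioi fun σ hσ => ?_
      rw [hexp_rw σ]; simp [waveKernel]; ring
    rw [hint, gauss_moment2' hb, hsq, hpow, htpow]
    have h4b : 1 / (4 * b) = t := by rw [hb_def]; field_simp
    rw [h4b, mul_zero, neg_zero, Real.exp_zero]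
    field_simp
  · set c : ℝ := Real.sqrt lam with hc_def
    have hc : 0 < c := Real.sqrt_pos.mpr hlam0
    have hint : ∫ σ in Ioi (0:ℝ), σ * Real.exp (-(σ^2/(4*t))) * waveKernel σ lam
        = ∫ σ in Ioi (0:ℝ), (σ * Real.exp (-b * σ^2) * Real.sin (σ * c)) * c⁻¹ := by
      refine setIntegral_congr_fun measurableSet_Ioi fun σ hσ => ?_
      rw [hexp_rw σ, waveKernel, if_neg hlam0.ne', ← hc_def]
      field_simp
    rw [hint, integral_mul_const, gauss_sin' hb c, hsq, hpow, htpow]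
    have hcsq : c ^ 2 = lam := Real.sq_sqrt hlam0.le
    have hexp2 : Real.exp (-c^2/(4*b)) = Real.exp (-(t*lam)) := by
      congr 1; rw [hcsq, hb_def]; field_simp
    have htne : t ≠ 0 := ht.ne'
    have h4b : c / (4 * b) = t * c := by rw [hb_def]; field_simp
    rw [hexp2, h4b]
    field_simp

end Aux

/-- Transmutation formula: for every `g ∈ X` and `t > 0`,
`e^{-tA} g = (1/2) π^{-1/2} t^{-3/2} ∫₀^∞ σ e^{-σ²/(4t)} W_A(σ) g dσ`
(stated pointwise on the spectral side, which is the identity in `X`). -/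
theorem stmt10 {ι : Type*} [MeasurableSpace ι] (μ : Measure ι)
    (a : ι → ℝ) (hameas : Measurable a) (ha0 : ∀ i, 0 ≤ a i)
    (g : ι → ℂ) (hg : MemLp g 2 μ) (t : ℝ) (ht : 0 < t) :
    ∀ i, ((Real.exp (-(t * a i)) : ℝ) : ℂ) * g i
      = (((1 / 2) * Real.pi ^ (-(1 : ℝ) / 2) * t ^ (-(3 : ℝ) / 2) : ℝ) : ℂ) *
          ∫ σ in Set.Ioi (0 : ℝ),
            ((σ * Real.exp (-(σ ^ 2 / (4 * t))) * waveKernel σ (a i) : ℝ) : ℂ) * g i := by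
  intro i
  have h1 : (∫ σ in Set.Ioi (0 : ℝ),
        ((σ * Real.exp (-(σ ^ 2 / (4 * t))) * waveKernel σ (a i) : ℝ) : ℂ) * g i)
      = ((∫ σ in Set.Ioi (0 : ℝ),
          σ * Real.exp (-(σ ^ 2 / (4 * t))) * waveKernel σ (a i) : ℝ) : ℂ) * g i := by
    rw [integral_mul_const]
    congr 1
    exact integral_ofReal
  rw [h1]
  have h2 := key' ht (ha0 i)
  rw [show -(t * a i) = -(t * a i) from rfl] at h2
  calc ((Real.exp (-(t * a i)) : ℝ) : ℂ) * g i
      = ((((1 / 2) * Real.pi ^ (-(1:ℝ)/2) * t ^ (-(3:ℝ)/2)) *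
          ∫ σ in Set.Ioi (0:ℝ),
            σ * Real.exp (-(σ^2/(4*t))) * waveKernel σ (a i) : ℝ) : ℂ) * g i := by
        rw [← h2]
    _ = _ := by push_cast; ring
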